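/- Let W ≤ S_d be a permutation group and χ : W → U(K) a character, with K an integral domain and |W| invertible in K. If E is a projective K-module, then the d-th semi-symmetric power [χ]^d(E) is a projective K-module; and if E is a finitely generated projective K-module, then [χ]^d(E) is a finitely generated projective K-module. -/

import Mathlib

noncomputable section

open scoped TensorProduct

/-- The action of a permutation `σ` of `Fin d` on the `d`-th tensor power
`T^d(E)`, determined by `σ • (x₁ ⊗ ⋯ ⊗ x_d) = x_{σ⁻¹(1)} ⊗ ⋯ ⊗ x_{σ⁻¹(d)}`. -/
def permAct (K : Type*) [CommRing K] (E : Type*) [AddCommGroup E] [Module K E]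
    (d : ℕ) (σ : Equiv.Perm (Fin d)) :
    (⨂[K] (_ : Fin d), E) ≃ₗ[K] ⨂[K] (_ : Fin d), E :=
  PiTensorProduct.reindex K (fun _ : Fin d => E) σ

/-- The submodule `_{χ⁻¹}T^d(E)` of `T^d(E)` generated by the elements
`χ⁻¹(σ) z − σ z` for `σ ∈ W`; the quotient by it is the `d`-th
semi-symmetric power `[χ]^d(E)` of weight `χ`. -/
def chiKer {K : Type*} [CommRing K] (E : Type*) [AddCommGroup E] [Module K E]
    {d : ℕ} (W : Subgroup (Equiv.Perm (Fin d))) (χ : W →* Kˣ) :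
    Submodule K (⨂[K] (_ : Fin d), E) :=
  Submodule.span K {w | ∃ (σ : W) (z : ⨂[K] (_ : Fin d), E),
    w = (((χ σ)⁻¹ : Kˣ) : K) • z - permAct K E d (σ : Equiv.Perm (Fin d)) z}

/-- The `d`-th semi-symmetric power `[χ]^d(E) = T^d(E)/_{χ⁻¹}T^d(E)`
of weight `χ` of the `K`-module `E`. -/
abbrev SemiPow {K : Type*} [CommRing K] (E : Type*) [AddCommGroup E] [Module K E]
    {d : ℕ} (W : Subgroup (Equiv.Perm (Fin d))) (χ : W →* Kˣ) :=
  (⨂[K] (_ : Fin d), E) ⧸ chiKer E W χ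

/-- The decomposable `d-χ`-vector `x₁ χ ⋯ χ x_d`. -/
def semiMk {K : Type*} [CommRing K] {E : Type*} [AddCommGroup E] [Module K E]
    {d : ℕ} (W : Subgroup (Equiv.Perm (Fin d))) (χ : W →* Kˣ)
    (x : Fin d → E) : SemiPow E W χ :=
  Submodule.Quotient.mk (PiTensorProduct.tprod K x)

section Aux

variable {K : Type*} [CommRing K] {E : Type*} [AddCommGroup E] [Module K E]

lemma tpow_projective_finite (n : ℕ) :
    (Module.Projective K E → Module.Projective K (⨂[K] (_ : Fin n), E)) ∧
    (Module.Finite K E → Module.Finite K (⨂[K] (_ : Fin n), E)) := by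
  induction n with
  | zero =>
    constructor
    · intro _
      exact Module.Projective.of_equiv
        (PiTensorProduct.isEmptyEquiv (R := K) (s := fun _ : Fin 0 => E) (Fin 0)).symm
    · intro _
      exact Module.Finite.equiv
        (PiTensorProduct.isEmptyEquiv (R := K) (s := fun _ : Fin 0 => E) (Fin 0)).symm
  | succ n ih =>
    have e1 : ((⨂[K] (_ : Fin n), E) ⊗[K] (⨂[K] (_ : Fin 1), E)) ≃ₗ[K]
        ⨂[K] (_ : Fin n ⊕ Fin 1), E := PiTensorProduct.tmulEquiv K E
    have e2 : (⨂[K] (_ : Fin n ⊕ Fin 1), E) ≃ₗ[K] ⨂[K] (_ : Fin (n + 1)), E :=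
      PiTensorProduct.reindex K (fun _ => E) finSumFinEquiv
    have e3 : ((⨂[K] (_ : Fin n), E) ⊗[K] E) ≃ₗ[K]
        ((⨂[K] (_ : Fin n), E) ⊗[K] (⨂[K] (_ : Fin 1), E)) :=
      LinearEquiv.lTensor _ (PiTensorProduct.subsingletonEquiv (R := K) (s := fun _ : Fin 1 => E) (0 : Fin 1)).symm
    constructor
    · intro hE
      haveI := ih.1 hE
      haveI := hE
      exact Module.Projective.of_equiv ((e3.trans e1).trans e2)
    · intro hE
      haveI := ih.2 hE
      haveI := hE
      exact Module.Finite.equiv ((e3.trans e1).trans e2)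

end Aux

/-- Corollary II.8. Let `W ≤ S_d` with `|W| ∈ U(K)` and `K`
an integral domain. If `E` is projective then `[χ]^d(E)` is projective, and
if `E` is finitely generated projective then so is `[χ]^d(E)`. -/
theorem semiPow_projective {K : Type*} [CommRing K] [IsDomain K]
    {E : Type*} [AddCommGroup E] [Module K E]
    {d : ℕ} (W : Subgroup (Equiv.Perm (Fin d))) (χ : W →* Kˣ)
    (hcard : IsUnit ((Nat.card W : K))) :
    (Module.Projective K E → Module.Projective K (SemiPow E W χ)) ∧
    (Module.Projective K E → Module.Finite K E →
      Module.Projective K (SemiPow E W χ) ∧ Module.Finite K (SemiPow E W χ)) := by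
  classical
  haveI : Fintype W := Fintype.ofFinite _
  set T := (⨂[K] (_ : Fin d), E)
  set v : K := ((hcard.unit⁻¹ : Kˣ) : K) with hv_def
  have hv : (Nat.card W : K) * v = 1 := by
    set_option linter.unnecessarySimpa false in
    have h := hcard.unit.mul_inv
    simpa [hv_def, IsUnit.unit_spec] using h
  -- the averaging operator
  set e : T →ₗ[K] T :=
    v • ∑ σ : W, (((χ σ) : Kˣ) : K) • (permAct K E d (σ : Equiv.Perm (Fin d))).toLinearMap
    with he_def
  have hmul : ∀ (σ τ : W) (z : T),
      permAct K E d (τ : Equiv.Perm (Fin d)) (permAct K E d (σ : Equiv.Perm (Fin d)) z)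
        = permAct K E d ((τ * σ : W) : Equiv.Perm (Fin d)) z := by
    intro σ τ z
    have h := PiTensorProduct.reindex_reindex (R := K) (s := fun _ : Fin d => E)
      (σ : Equiv.Perm (Fin d)) (τ : Equiv.Perm (Fin d)) z
    have h2 : ((σ : Equiv.Perm (Fin d)).trans (τ : Equiv.Perm (Fin d)))
        = ((τ * σ : W) : Equiv.Perm (Fin d)) := by ext x; rfl
    rw [permAct, permAct, permAct, ← h2]
    exact h
  -- e semi-commutes with the action
  have key : ∀ (σ : W) (z : T),
      e (permAct K E d (σ : Equiv.Perm (Fin d)) z) = (((χ σ)⁻¹ : Kˣ) : K) • e z := by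
    intro σ z
    simp only [he_def, LinearMap.smul_apply, LinearMap.sum_apply, LinearMap.coe_smul,
      Pi.smul_apply, LinearEquiv.coe_coe]
    simp only [Finset.smul_sum]
    refine Fintype.sum_equiv (Equiv.mulRight σ)
      (fun x : W => v • (((χ x) : Kˣ) : K) •
        (permAct K E d (x : Equiv.Perm (Fin d))) ((permAct K E d (σ : Equiv.Perm (Fin d))) z))
      (fun x : W => (((χ σ)⁻¹ : Kˣ) : K) • v • (((χ x) : Kˣ) : K) •
        (permAct K E d (x : Equiv.Perm (Fin d))) z) (fun τ => ?_)
    simp only [Equiv.coe_mulRight]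
    rw [hmul σ τ z]
    simp only [smul_smul]
    congr 1
    have hcoe : ((χ (τ * σ) : Kˣ) : K) = ((χ τ : Kˣ) : K) * ((χ σ : Kˣ) : K) := by
      rw [map_mul, Units.val_mul]
    have h1 : (((χ σ)⁻¹ : Kˣ) : K) * ((χ σ : Kˣ) : K) = 1 := by
      rw [← Units.val_mul, inv_mul_cancel, Units.val_one]
    rw [hcoe]
    linear_combination (-(v * ((χ τ : Kˣ) : K))) * h1
  -- e vanishes on chiKer
  have hker : chiKer E W χ ≤ LinearMap.ker e := by
    rw [chiKer, Submodule.span_le]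
    rintro w ⟨σ, z, rfl⟩
    simp only [SetLike.mem_coe, LinearMap.mem_ker, map_sub, map_smul, key σ z, sub_self]
  -- z - e z ∈ chiKer
  have hproj : ∀ z : T, z - e z ∈ chiKer E W χ := by
    intro z
    have hz : z - e z = v • ∑ σ : W, (z - ((χ σ : Kˣ) : K) •
        permAct K E d (σ : Equiv.Perm (Fin d)) z) := by
      rw [Finset.sum_sub_distrib, smul_sub]
      congr 1
      · rw [Finset.sum_const, Finset.card_univ, ← Nat.card_eq_fintype_card,
          ← Nat.cast_smul_eq_nsmul K, smul_smul, mul_comm v, hv, one_smul]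
      · simp only [he_def, LinearMap.smul_apply, LinearMap.sum_apply, LinearMap.coe_smul,
          Pi.smul_apply, LinearEquiv.coe_coe, Finset.smul_sum]
    rw [hz]
    refine Submodule.smul_mem _ v (Submodule.sum_mem _ fun σ _ => ?_)
    have : z - ((χ σ : Kˣ) : K) • permAct K E d (σ : Equiv.Perm (Fin d)) z
        = ((χ σ : Kˣ) : K) • ((((χ σ)⁻¹ : Kˣ) : K) • z
            - permAct K E d (σ : Equiv.Perm (Fin d)) z) := by
      rw [smul_sub, smul_smul, ← Units.val_mul, mul_inv_cancel, Units.val_one, one_smul]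
    rw [this]
    exact Submodule.smul_mem _ _ (Submodule.subset_span ⟨σ, z, rfl⟩)
  -- the splitting
  set s : SemiPow E W χ →ₗ[K] T := (chiKer E W χ).liftQ e hker with hs_def
  have hsplit : (chiKer E W χ).mkQ.comp s = LinearMap.id := by
    refine Submodule.linearMap_qext _ (LinearMap.ext fun z => ?_)
    simp only [LinearMap.comp_apply, hs_def, Submodule.liftQ_apply, Submodule.mkQ_apply,
      LinearMap.id_apply]
    rw [Submodule.Quotient.eq]
    simpa [neg_sub] using Submodule.neg_mem _ (hproj z)
  have main : Module.Projective K E → Module.Projective K (SemiPow E W χ) := by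
    intro hE
    haveI : Module.Projective K T := (tpow_projective_finite d).1 hE
    exact Module.Projective.of_split s (chiKer E W χ).mkQ hsplit
  refine ⟨main, fun hE hEf => ⟨main hE, ?_⟩⟩
  haveI : Module.Finite K T := (tpow_projective_finite d).2 hEf
  exact Module.Finite.quotient K _
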